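/- Let B ≥ 1 and let L_b > 0 for b ∈ Fin B. Define F : ℂ → ℂ by F(s) = 2 (e^{−iπs} + 1) · ζ(s) · ∑_{b=1}^{B} (π/L_b)^{−s}, where ζ is the Riemann zeta function and (π/L_b)^{−s} is the complex power of the positive real π/L_b. Then F has a derivative at s = 0 equal to iπB − 2B·log(2π) + 2 ∑_{b=1}^{B} log(π/L_b). -/

import Mathlib

open Complex Filter

lemma hasDerivAt_riemannZeta_zero :
    HasDerivAt riemannZeta (-(Real.log (2 * Real.pi)) / 2 : ℂ) 0 := by
  have hπ : (Real.pi : ℂ) ≠ 0 := ofReal_ne_zero.mpr Real.pi_ne_zero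
  set Λ₀ := completedRiemannZeta₀ with hΛ₀
  set Z : ℂ → ℂ := fun s => (Real.pi : ℂ) ^ (s / 2) * (s * Λ₀ s - 1 - s / (1 - s)) /
    (2 * Complex.Gamma (s / 2 + 1)) with hZ
  -- derivatives of the pieces at 0
  have h1 : HasDerivAt (fun s : ℂ => (Real.pi : ℂ) ^ (s / 2)) (Complex.log Real.pi / 2) 0 := by
    have := ((hasDerivAt_id (0 : ℂ)).div_const 2).const_cpow (c := (Real.pi : ℂ)) (Or.inl hπ)
    simpa [div_eq_mul_inv, mul_comm] using this
  have h2 : HasDerivAt (fun s : ℂ => s * Λ₀ s - 1 - s / (1 - s)) (Λ₀ 0 - 1) 0 := by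
    have hA : HasDerivAt (fun s : ℂ => s * Λ₀ s)
        (1 * Λ₀ 0 + 0 * deriv Λ₀ 0) 0 :=
      (hasDerivAt_id 0).mul (differentiable_completedZeta₀ 0).hasDerivAt
    have hB : HasDerivAt (fun s : ℂ => s / (1 - s))
        ((1 * (1 - 0) - 0 * (0 - 1)) / (1 - 0) ^ 2) 0 := by
      exact (hasDerivAt_id 0).div ((hasDerivAt_const 0 (1:ℂ)).sub (hasDerivAt_id 0)) (by norm_num)
    have := (hA.sub_const 1).sub hB
    refine this.congr_deriv (Eq.symm ?_)
    simp
  have h3 : HasDerivAt (fun s : ℂ => 2 * Complex.Gamma (s / 2 + 1))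
      (-(Real.eulerMascheroniConstant : ℂ)) 0 := by
    have hg : HasDerivAt (fun s : ℂ => s / 2 + 1) (1 / 2) 0 := by
      simpa using ((hasDerivAt_id (0 : ℂ)).div_const 2).add_const 1
    have hG : HasDerivAt Complex.Gamma (-(Real.eulerMascheroniConstant : ℂ)) ((0:ℂ) / 2 + 1) := by
      rw [show (0:ℂ)/2 + 1 = 1 by norm_num]
      exact Complex.hasDerivAt_Gamma_one
    have := (hG.comp 0 hg).const_mul 2
    refine this.congr_deriv (Eq.symm ?_)
    ring
  have hG1 : Complex.Gamma ((0:ℂ) / 2 + 1) = 1 := by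
    rw [show (0:ℂ)/2 + 1 = 1 by norm_num]; exact Complex.Gamma_one
  have h3ne : 2 * Complex.Gamma ((0:ℂ) / 2 + 1) ≠ 0 := by rw [hG1]; norm_num
  have hZder : HasDerivAt Z
      (((Complex.log Real.pi / 2 * ((0:ℂ) * Λ₀ 0 - 1 - 0 / (1 - 0)) +
        (Real.pi : ℂ) ^ ((0:ℂ) / 2) * (Λ₀ 0 - 1)) * (2 * Complex.Gamma ((0:ℂ) / 2 + 1)) -
        (Real.pi : ℂ) ^ ((0:ℂ) / 2) * ((0:ℂ) * Λ₀ 0 - 1 - 0 / (1 - 0)) *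
          (-(Real.eulerMascheroniConstant : ℂ))) / (2 * Complex.Gamma ((0:ℂ) / 2 + 1)) ^ 2) 0 :=
    (h1.mul h2).div h3 h3ne
  -- the value of Λ₀ at 0
  have hΛ0 : Λ₀ 0 = ((Real.eulerMascheroniConstant : ℂ) - Complex.log (4 * Real.pi)) / 2 + 1 := by
    have := completedRiemannZeta₀_one_sub 1
    rw [sub_self] at this
    rw [hΛ₀, this, completedRiemannZeta₀_one]
  -- Z agrees with ζ near 0
  have heq : riemannZeta =ᶠ[nhds (0 : ℂ)] Z := by
    filter_upwards [Metric.ball_mem_nhds (0 : ℂ) (by norm_num : (0:ℝ) < 1/2)] with s hs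
    rw [Metric.mem_ball, dist_zero_right] at hs
    rcases eq_or_ne s 0 with rfl | hs0
    · simp [hZ, riemannZeta_zero, hG1]
    · have hs1 : (1 : ℂ) - s ≠ 0 := by
        intro h
        rw [sub_eq_zero] at h
        rw [← h] at hs
        norm_num at hs
      have hGne : Complex.Gamma (s / 2) ≠ 0 := by
        apply Complex.Gamma_ne_zero
        intro m
        cases m with
        | zero => simpa using (div_ne_zero hs0 two_ne_zero)
        | succ n =>
          intro h
          have hs' : s = ((-2 * ((n : ℝ) + 1) : ℝ) : ℂ) := by
            push_cast at h ⊢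
            linear_combination 2 * h
          rw [hs', Complex.norm_real, Real.norm_eq_abs,
            abs_of_nonpos (by nlinarith [(Nat.cast_nonneg n : (0:ℝ) ≤ n)] : -2 * ((n:ℝ) + 1) ≤ 0)] at hs
          nlinarith [(Nat.cast_nonneg n : (0:ℝ) ≤ n)]
      have hcpow : (Real.pi : ℂ) ^ (s / 2) ≠ 0 := by
        rw [Complex.cpow_def_of_ne_zero hπ]
        exact Complex.exp_ne_zero _
      simp only [hZ]
      rw [riemannZeta_def_of_ne_zero hs0, completedRiemannZeta_eq, Gammaℝ_def,
        Complex.Gamma_add_one (s/2) (div_ne_zero hs0 two_ne_zero),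
        show -s / 2 = -(s / 2) by ring, Complex.cpow_neg]
      field_simp
      ring
  refine HasDerivAt.congr_of_eventuallyEq ?_ heq
  refine hZder.congr_deriv (Eq.symm ?_)
  rw [hΛ0, hG1, show (Real.pi:ℂ) ^ ((0:ℂ)/2) = 1 by norm_num]
  have h4π : Complex.log (4 * Real.pi) = (Real.log (4 * Real.pi) : ℂ) := by
    rw [show (4 : ℂ) * Real.pi = ((4 * Real.pi : ℝ) : ℂ) by push_cast; ring,
      Complex.ofReal_log (by positivity)]
  have hπlog : Complex.log Real.pi = (Real.log Real.pi : ℂ) :=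
    (Complex.ofReal_log Real.pi_pos.le).symm
  have hlog : (Real.log Real.pi : ℝ) + Real.log (4 * Real.pi) = 2 * Real.log (2 * Real.pi) := by
    have e1 : Real.log (4 * Real.pi) = Real.log 2 + Real.log (2 * Real.pi) := by
      rw [show (4:ℝ) * Real.pi = 2 * (2 * Real.pi) by ring,
        Real.log_mul two_ne_zero (by positivity)]
    have e2 : Real.log (2 * Real.pi) = Real.log 2 + Real.log Real.pi :=
      Real.log_mul two_ne_zero Real.pi_ne_zero
    linarith
  rw [h4π, hπlog]
  have hl : ((Real.log Real.pi : ℂ)) + (Real.log (4 * Real.pi) : ℂ) = 2 * (Real.log (2 * Real.pi) : ℂ) := by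
    exact_mod_cast hlog
  linear_combination ((1:ℂ)/4) * hl

/-- The pole contribution `F(s) = 2(e^{−iπs}+1) ζ(s) ∑_b (π/L_b)^{−s}` to the spectral zeta
function of a massless graph Dirac operator has derivative at `s = 0` equal to
`iπB − 2B log(2π) + 2 ∑_b log(π/L_b)`. -/
theorem dirac_zeta_pole_contribution_deriv_at_zero
    (B : ℕ) (hB : 1 ≤ B) (L : Fin B → ℝ) (hL : ∀ b, 0 < L b) :
    HasDerivAt
      (fun s : ℂ => 2 * (Complex.exp (-(Real.pi * Complex.I * s)) + 1) * riemannZeta s *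
        ∑ b, ((Real.pi / L b : ℝ) : ℂ) ^ (-s))
      (Complex.I * Real.pi * B - 2 * B * (Real.log (2 * Real.pi) : ℂ) +
        2 * ∑ b, (Real.log (Real.pi / L b) : ℂ))
      0 := by
  have hE : HasDerivAt (fun s : ℂ => 2 * (Complex.exp (-(Real.pi * Complex.I * s)) + 1))
      (2 * (Complex.exp (-(Real.pi * Complex.I * 0)) * -(Real.pi * Complex.I))) 0 := by
    have h0 : HasDerivAt (fun s : ℂ => -(Real.pi * Complex.I * s)) (-(Real.pi * Complex.I)) 0 := by
      exact (((hasDerivAt_id (0:ℂ)).const_mul ((Real.pi : ℂ) * Complex.I)).neg).congr_deriv (by simp)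
    exact ((h0.cexp).add_const 1).const_mul 2
  have hg : ∀ b : Fin B, HasDerivAt (fun s : ℂ => ((Real.pi / L b : ℝ) : ℂ) ^ (-s))
      (-(Real.log (Real.pi / L b) : ℂ)) 0 := by
    intro b
    have hb : (0:ℝ) < Real.pi / L b := div_pos Real.pi_pos (hL b)
    have hc : ((Real.pi / L b : ℝ) : ℂ) ≠ 0 := ofReal_ne_zero.mpr hb.ne'
    have := ((hasDerivAt_id (0:ℂ)).neg).const_cpow (c := ((Real.pi / L b : ℝ) : ℂ)) (Or.inl hc)
    simpa [Complex.ofReal_log hb.le] using this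
  have hgs : HasDerivAt (fun s : ℂ => ∑ b, ((Real.pi / L b : ℝ) : ℂ) ^ (-s))
      (∑ b, -(Real.log (Real.pi / L b) : ℂ)) 0 := HasDerivAt.fun_sum (fun b _ => hg b)
  have h := (hE.mul hasDerivAt_riemannZeta_zero).mul hgs
  refine h.congr_deriv (Eq.symm ?_)
  have e1 : Complex.exp (-((Real.pi : ℂ) * Complex.I * 0)) = 1 := by simp
  have e2 : ∀ b : Fin B, ((Real.pi / L b : ℝ) : ℂ) ^ (-(0:ℂ)) = 1 := by
    intro b; simp
  rw [Pi.mul_apply]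
  rw [riemannZeta_zero, e1]
  rw [Finset.sum_congr rfl (fun b _ => e2 b), Finset.sum_const, Finset.card_univ,
    Fintype.card_fin, Finset.sum_neg_distrib]
  push_cast
  ring
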